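/- (Uniqueness of the Iwasawa decomposition of GL(m,ℝ).) Let k₁, k₂ be orthogonal m×m real matrices, a₁, a₂ diagonal m×m matrices with strictly positive diagonal entries, and n₁, n₂ upper triangular m×m matrices with all diagonal entries equal to 1. If k₁·a₁·n₁ = k₂·a₂·n₂, then k₁ = k₂, a₁ = a₂, and n₁ = n₂. -/

import Mathlib

open Matrix

theorem iwasawa_decomposition_unique (m : ℕ)
    (k₁ k₂ a₁ a₂ n₁ n₂ : Matrix (Fin m) (Fin m) ℝ)
    (hk₁ : k₁ᵀ * k₁ = 1) (hk₂ : k₂ᵀ * k₂ = 1)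
    (ha₁ : a₁.IsDiag) (ha₁' : ∀ i, 0 < a₁ i i)
    (ha₂ : a₂.IsDiag) (ha₂' : ∀ i, 0 < a₂ i i)
    (hn₁ : n₁.BlockTriangular id) (hn₁' : ∀ i, n₁ i i = 1)
    (hn₂ : n₂.BlockTriangular id) (hn₂' : ∀ i, n₂ i i = 1)
    (h : k₁ * a₁ * n₁ = k₂ * a₂ * n₂) :
    k₁ = k₂ ∧ a₁ = a₂ ∧ n₁ = n₂ := by
  classical
  set u₁ := a₁ * n₁ with hu₁def
  set u₂ := a₂ * n₂ with hu₂def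
  have hda₁ : Matrix.diagonal a₁.diag = a₁ := ha₁.diagonal_diag
  have hda₂ : Matrix.diagonal a₂.diag = a₂ := ha₂.diagonal_diag
  have hu₁e : ∀ i j, u₁ i j = a₁ i i * n₁ i j := by
    intro i j
    rw [hu₁def, ← hda₁, diagonal_mul, diagonal_apply_eq]
  have hu₂e : ∀ i j, u₂ i j = a₂ i i * n₂ i j := by
    intro i j
    rw [hu₂def, ← hda₂, diagonal_mul, diagonal_apply_eq]
  have hta₁ : a₁.BlockTriangular id := fun i j hij => ha₁ (Ne.symm (ne_of_lt hij))
  have hta₂ : a₂.BlockTriangular id := fun i j hij => ha₂ (Ne.symm (ne_of_lt hij))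
  have htu₁ : u₁.BlockTriangular id := hta₁.mul hn₁
  have htu₂ : u₂.BlockTriangular id := hta₂.mul hn₂
  have hu₁d : ∀ i, u₁ i i = a₁ i i := fun i => by rw [hu₁e, hn₁', mul_one]
  have hu₂d : ∀ i, u₂ i i = a₂ i i := fun i => by rw [hu₂e, hn₂', mul_one]
  have hdet₁ : IsUnit u₁.det := by
    rw [Matrix.det_of_upperTriangular htu₁]
    exact (Finset.prod_pos fun i _ => (hu₁d i) ▸ ha₁' i).ne'.isUnit
  haveI : Invertible u₁ := u₁.invertibleOfIsUnitDet hdet₁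
  -- the orthogonal factor
  set M := k₂ᵀ * k₁ with hMdef
  have hk₂' : k₂ * k₂ᵀ = 1 := mul_eq_one_comm.mp hk₂
  have hM1 : Mᵀ * M = 1 := by
    rw [hMdef, transpose_mul, transpose_transpose, Matrix.mul_assoc,
      ← Matrix.mul_assoc k₂, hk₂', Matrix.one_mul, hk₁]
  have hMu : M * u₁ = u₂ := by
    have h' : k₁ * u₁ = k₂ * u₂ := by rw [hu₁def, hu₂def, ← Matrix.mul_assoc, ← Matrix.mul_assoc]; exact h
    rw [hMdef, Matrix.mul_assoc, h', ← Matrix.mul_assoc, hk₂, Matrix.one_mul]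
  have hMeq : M = u₂ * u₁⁻¹ := by
    rw [← hMu, Matrix.mul_assoc, Matrix.mul_nonsing_inv _ hdet₁, Matrix.mul_one]
  have htM : M.BlockTriangular id := hMeq ▸ htu₂.mul (blockTriangular_inv_of_blockTriangular htu₁)
  haveI : Invertible M := invertibleOfLeftInverse _ _ hM1
  have hMinv : M⁻¹ = Mᵀ := Matrix.inv_eq_left_inv hM1
  have htMinv : (M⁻¹).BlockTriangular id := blockTriangular_inv_of_blockTriangular htM
  have hMDiag : M.IsDiag := by
    intro i j hij
    rcases lt_or_gt_of_ne hij with h' | h'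
    · have := htMinv (show id i < id j from h')
      rw [hMinv, transpose_apply] at this
      exact this
    · exact htM h'
  have hMd : Matrix.diagonal M.diag = M := hMDiag.diagonal_diag
  have hMpos : ∀ i, 0 < M i i := by
    intro i
    have hMui : M i i * u₁ i i = u₂ i i := by
      have : (Matrix.diagonal M.diag * u₁) i i = u₂ i i := by rw [hMd, hMu]
      rwa [diagonal_mul] at this
    have h1 : 0 < u₁ i i := (hu₁d i) ▸ ha₁' i
    have h2 : 0 < u₂ i i := (hu₂d i) ▸ ha₂' i
    nlinarith
  have hMone : M = 1 := by
    have hsq : ∀ i, M i i * M i i = 1 := by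
      intro i
      have : (Mᵀ * M) i i = (1 : Matrix (Fin m) (Fin m) ℝ) i i := by rw [hM1]
      rw [← hMd] at this
      rw [diagonal_transpose, diagonal_mul_diagonal] at this
      simpa using this
    rw [← hMd, ← Matrix.diagonal_one, Matrix.diagonal_eq_diagonal_iff]
    intro i
    have := hsq i
    have := hMpos i
    have : M i i = 1 ∨ M i i = -1 := mul_self_eq_one_iff.mp (hsq i)
    rcases this with h' | h'
    · exact h'
    · nlinarith [hMpos i]
  have huu : u₁ = u₂ := by rw [← hMu, hMone, Matrix.one_mul]
  have hk : k₁ = k₂ := by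
    have : k₂ᵀ * k₁ = 1 := by rw [← hMdef, hMone]
    calc k₁ = k₂ * (k₂ᵀ * k₁) := by rw [← Matrix.mul_assoc, hk₂', Matrix.one_mul]
    _ = k₂ := by rw [this, Matrix.mul_one]
  have ha : a₁ = a₂ := by
    rw [← hda₁, ← hda₂, Matrix.diagonal_eq_diagonal_iff]
    intro i
    have := congrFun (congrFun huu i) i
    rw [hu₁d, hu₂d] at this
    exact this
  have hn : n₁ = n₂ := by
    have hdet : IsUnit a₁.det := by
      rw [← hda₁, det_diagonal]
      exact (Finset.prod_pos fun i _ => ha₁' i).ne'.isUnit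
    have : a₁ * n₁ = a₁ * n₂ := by rw [← hu₁def]; rw [huu, hu₂def, ha]
    calc n₁ = a₁⁻¹ * (a₁ * n₁) := by rw [← Matrix.mul_assoc, Matrix.nonsing_inv_mul _ hdet, Matrix.one_mul]
    _ = n₂ := by rw [this, ← Matrix.mul_assoc, Matrix.nonsing_inv_mul _ hdet, Matrix.one_mul]
  exact ⟨hk, ha, hn⟩
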